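/- If c > γ, the number of dinners in any feasible schedule is at least ⌈ (√s/(tγ)) · ( (c−γ)·max(√(γ/(c−γ)),1) + γ / max(√(γ/(c−γ)),1) ) ⌉. -/

import Mathlib

lemma minE_aux (x y m : ℝ) (hx : 0 < x) (hy : 0 < y) (hm : 1 ≤ m) :
    x * max (Real.sqrt (y / x)) 1 + y / max (Real.sqrt (y / x)) 1 ≤ x * m + y / m := by
  have hm0 : (0:ℝ) < m := lt_of_lt_of_le one_pos hm
  rcases le_total (Real.sqrt (y / x)) 1 with hle | hle
  · rw [max_eq_right hle, mul_one, div_one]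
    have h1 : y / x ≤ 1 := by
      nlinarith [Real.sq_sqrt (le_of_lt (div_pos hy hx)), Real.sqrt_nonneg (y / x)]
    have hyx : y ≤ x := (div_le_one hx).mp h1
    have hux : y / m ≤ x := le_trans (div_le_self hy.le hm) hyx
    nlinarith [mul_nonneg (sub_nonneg.2 hm) (sub_nonneg.2 hux),
      div_mul_cancel₀ y (ne_of_gt hm0)]
  · rw [max_eq_left hle]
    set r := Real.sqrt (y / x) with hr
    have hr0 : (0:ℝ) < r := lt_of_lt_of_le one_pos hle
    have hr2 : r ^ 2 = y / x := Real.sq_sqrt (div_pos hy hx).le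
    have hy' : y = x * (r * r) := by
      have := (div_eq_iff hx.ne').mp hr2.symm
      nlinarith [this]
    have e1 : y / r = x * r := by
      rw [hy']; field_simp
    rw [e1, hy']
    have hd : x * (r * r) / m * m = x * (r * r) := div_mul_cancel₀ _ (ne_of_gt hm0)
    nlinarith [mul_nonneg hx.le (sq_nonneg (m - r)), hd, hm0]

/-- A schedule of `d` dinners for the Business Dinner Problem with `t` tables,
`s` suppliers, `c` customers, at most `σ` suppliers and at most `γ` customers
per table. `supSeat e i = some tb` means supplier `i` sits at table `tb` at
dinner `e` (and `none` means the supplier skips the dinner); similarly for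
customers. -/
structure BDSchedule (t s c σ γ d : ℕ) where
  supSeat : Fin d → Fin s → Option (Fin t)
  cusSeat : Fin d → Fin c → Option (Fin t)
  /-- at most `σ` suppliers at each table at each dinner -/
  supCap : ∀ (e : Fin d) (tb : Fin t),
    (Finset.univ.filter fun i : Fin s => supSeat e i = some tb).card ≤ σ
  /-- at most `γ` customers at each table at each dinner -/
  cusCap : ∀ (e : Fin d) (tb : Fin t),
    (Finset.univ.filter fun k : Fin c => cusSeat e k = some tb).card ≤ γ
  /-- every supplier and customer share a table at exactly one dinner -/
  meetOnce : ∀ (i : Fin s) (k : Fin c), ∃! e : Fin d,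
    ∃ tb : Fin t, supSeat e i = some tb ∧ cusSeat e k = some tb
  /-- two distinct suppliers share a table at no more than one dinner -/
  supPairOnce : ∀ i j : Fin s, i ≠ j →
    (Finset.univ.filter fun e : Fin d =>
      ∃ tb : Fin t, supSeat e i = some tb ∧ supSeat e j = some tb).card ≤ 1

set_option maxHeartbeats 1600000 in
open Real in
/-- Lower bound `lb₄`: if `c > γ` then the number of dinners is at least
`⌈(√s/(tγ))·((c-γ)·max(√(γ/(c-γ)),1) + γ/max(√(γ/(c-γ)),1))⌉`. -/
theorem business_dinner_lb_four (t s c σ γ d : ℕ)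
    (ht : 1 ≤ t) (hσ : 1 ≤ σ) (hγ : 1 ≤ γ) (hcγ : γ < c)
    (h : Nonempty (BDSchedule t s c σ γ d)) :
    (⌈Real.sqrt s / ((t : ℝ) * γ) *
        (((c : ℝ) - γ) * max (Real.sqrt ((γ : ℝ) / ((c : ℝ) - γ))) 1 +
          (γ : ℝ) / max (Real.sqrt ((γ : ℝ) / ((c : ℝ) - γ))) 1)⌉ : ℤ) ≤ (d : ℤ) := by
  obtain ⟨S⟩ := h
  rcases Nat.eq_zero_or_pos s with hs | hs
  · subst hs
    simp only [Nat.cast_zero, Real.sqrt_zero, zero_div, zero_mul, Int.ceil_zero]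
    exact_mod_cast Nat.zero_le d
  -- notation
  have hc : 0 < c := lt_trans (Nat.lt_of_lt_of_le Nat.zero_lt_one hγ) hcγ
  set x : ℝ := (c : ℝ) - γ with hxdef
  have hx : (0:ℝ) < x := by
    have : (γ:ℝ) < c := by exact_mod_cast hcγ
    simp [hxdef]; linarith
  have hy : (0:ℝ) < (γ:ℝ) := by exact_mod_cast hγ
  have htγ : (0:ℝ) < (t:ℝ) * γ := by
    have : (0:ℝ) < (t:ℝ) := by exact_mod_cast ht
    positivity
  set M : ℝ := max (Real.sqrt ((γ:ℝ) / x)) 1 with hMdef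
  set a : Fin c → ℕ := fun k =>
    (Finset.univ.filter fun e : Fin d => (S.cusSeat e k).isSome).card with hadef
  set B : Fin d × Fin t → ℕ := fun p =>
    (Finset.univ.filter fun i : Fin s => S.supSeat p.1 i = some p.2).card with hBdef
  -- a first dinner exists
  obtain ⟨e1, ⟨tb1, -, -⟩, -⟩ := S.meetOnce ⟨0, hs⟩ ⟨0, hc⟩
  obtain ⟨p0, -, hp0⟩ := Finset.exists_max_image (Finset.univ : Finset (Fin d × Fin t)) B
    ⟨(e1, tb1), Finset.mem_univ _⟩
  set b : ℕ := B p0 with hbdef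
  -- meeting dinner choice function
  have hmeet : ∀ (k : Fin c) (i : Fin s), ∃ e : Fin d, ∃ tb : Fin t,
      S.supSeat e i = some tb ∧ S.cusSeat e k = some tb := by
    intro k i
    obtain ⟨e, he, -⟩ := S.meetOnce i k
    exact ⟨e, he⟩
  choose f ftb hf1 hf2 using hmeet
  -- F2 : each customer covers all suppliers with tables of size ≤ b
  have F2 : ∀ k : Fin c, s ≤ a k * b := by
    intro k
    have maps : ∀ i : Fin s, i ∈ (Finset.univ : Finset (Fin s)) →
        f k i ∈ (Finset.univ.filter fun e : Fin d => (S.cusSeat e k).isSome) := by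
      intro i _
      simp only [Finset.mem_filter, Finset.mem_univ, true_and]
      rw [hf2 k i]; rfl
    have fib : ∀ e ∈ (Finset.univ.filter fun e : Fin d => (S.cusSeat e k).isSome),
        (Finset.univ.filter fun i : Fin s => f k i = e).card ≤ b := by
      intro e _
      rcases (Finset.univ.filter fun i : Fin s => f k i = e).eq_empty_or_nonempty with hemp | ⟨i₀, hi₀⟩
      · simp [hemp]
      · simp only [Finset.mem_filter, Finset.mem_univ, true_and] at hi₀
        have hk1 : S.cusSeat e k = some (ftb k i₀) := hi₀ ▸ hf2 k i₀
        have hsub : (Finset.univ.filter fun i : Fin s => f k i = e) ⊆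
            Finset.univ.filter fun i : Fin s => S.supSeat e i = some (ftb k i₀) := by
          intro i hi
          simp only [Finset.mem_filter, Finset.mem_univ, true_and] at hi ⊢
          have h1 : S.supSeat e i = some (ftb k i) := hi ▸ hf1 k i
          have h2 : S.cusSeat e k = some (ftb k i) := hi ▸ hf2 k i
          have : ftb k i = ftb k i₀ := by
            have := hk1 ▸ h2
            exact (Option.some.inj (h2.symm.trans hk1))
          rw [h1, this]
        calc (Finset.univ.filter fun i : Fin s => f k i = e).card
            ≤ B (e, ftb k i₀) := Finset.card_le_card hsub
          _ ≤ b := hp0 _ (Finset.mem_univ _)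
    calc s = (Finset.univ : Finset (Fin s)).card := by simp
      _ ≤ b * (Finset.univ.filter fun e : Fin d => (S.cusSeat e k).isSome).card :=
          Finset.card_le_mul_card_image_of_maps_to maps b fib
      _ = a k * b := by rw [hadef, mul_comm]
  -- the big table
  set K₀ : Finset (Fin c) := Finset.univ.filter fun k => S.cusSeat p0.1 k = some p0.2 with hK₀def
  have hK₀γ : K₀.card ≤ γ := S.cusCap p0.1 p0.2
  -- F3 : customers away from the big table appear at least b times
  have F3 : ∀ k : Fin c, k ∉ K₀ → b ≤ a k := by
    intro k hk
    have hknot : ¬ S.cusSeat p0.1 k = some p0.2 := by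
      simpa [hK₀def] using hk
    have : (Finset.univ.filter fun i : Fin s => S.supSeat p0.1 i = some p0.2).card ≤ a k := by
      apply Finset.card_le_card_of_injOn (f k)
      · intro i _
        simp only [Finset.mem_coe, Finset.coe_filter, Set.mem_setOf_eq, Finset.mem_filter, Finset.mem_univ, true_and]
        rw [hf2 k i]; rfl
      · intro i hi j hj hij
        simp only [Finset.coe_filter, Set.mem_setOf_eq, Finset.mem_univ, true_and] at hi hj
        by_contra hne
        -- i and j share tables at dinners (f k i) and p0.1
        have htb : ftb k i = ftb k j := by
          have h2i : S.cusSeat (f k i) k = some (ftb k i) := hf2 k i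
          have h2j : S.cusSeat (f k i) k = some (ftb k j) := hij ▸ hf2 k j
          exact Option.some.inj (h2i.symm.trans h2j)
        have hshare : S.supSeat (f k i) i = some (ftb k i) ∧
            S.supSeat (f k i) j = some (ftb k i) := by
          constructor
          · exact hf1 k i
          · rw [htb]; exact hij ▸ hf1 k j
        have hEne : f k i ≠ p0.1 := by
          intro heq
          apply hknot
          have h1 : S.supSeat p0.1 i = some (ftb k i) := heq ▸ hshare.1
          have : ftb k i = p0.2 := Option.some.inj (h1.symm.trans hi)
          have h2 : S.cusSeat (f k i) k = some (ftb k i) := hf2 k i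
          rw [heq, this] at h2
          exact h2
        have hcard : 1 < (Finset.univ.filter fun e : Fin d =>
            ∃ tb : Fin t, S.supSeat e i = some tb ∧ S.supSeat e j = some tb).card := by
          apply Finset.one_lt_card.mpr
          refine ⟨f k i, ?_, p0.1, ?_, hEne⟩
          · simp only [Finset.mem_filter, Finset.mem_univ, true_and]
            exact ⟨ftb k i, hshare⟩
          · simp only [Finset.mem_filter, Finset.mem_univ, true_and]
            exact ⟨p0.2, hi, hj⟩
        have := S.supPairOnce i j hne
        omega
    exact this
  -- F1 : total appearances bounded by d·t·γ
  have F1 : ∑ k : Fin c, a k ≤ d * (t * γ) := by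
    have swap : ∑ k : Fin c, a k =
        ∑ e : Fin d, (Finset.univ.filter fun k : Fin c => (S.cusSeat e k).isSome).card := by
      simp only [hadef, Finset.card_filter]
      rw [Finset.sum_comm]
    rw [swap]
    have per : ∀ e : Fin d,
        (Finset.univ.filter fun k : Fin c => (S.cusSeat e k).isSome).card ≤ t * γ := by
      intro e
      have hsub : (Finset.univ.filter fun k : Fin c => (S.cusSeat e k).isSome) ⊆
          Finset.univ.biUnion fun tb : Fin t =>
            Finset.univ.filter fun k : Fin c => S.cusSeat e k = some tb := by
        intro k hk
        simp only [Finset.mem_filter, Finset.mem_univ, true_and] at hk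
        obtain ⟨tb, htb⟩ := Option.isSome_iff_exists.mp hk
        simp only [Finset.mem_biUnion, Finset.mem_filter, Finset.mem_univ, true_and]
        exact ⟨tb, htb⟩
      calc (Finset.univ.filter fun k : Fin c => (S.cusSeat e k).isSome).card
          ≤ (Finset.univ.biUnion fun tb : Fin t =>
              Finset.univ.filter fun k : Fin c => S.cusSeat e k = some tb).card :=
            Finset.card_le_card hsub
        _ ≤ ∑ tb : Fin t, (Finset.univ.filter fun k : Fin c => S.cusSeat e k = some tb).card :=
            Finset.card_biUnion_le
        _ ≤ ∑ _tb : Fin t, γ := Finset.sum_le_sum fun tb _ => S.cusCap e tb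
        _ = t * γ := by simp [Finset.sum_const, Finset.card_univ]
    calc ∑ e : Fin d, (Finset.univ.filter fun k : Fin c => (S.cusSeat e k).isSome).card
        ≤ ∑ _e : Fin d, t * γ := Finset.sum_le_sum fun e _ => per e
      _ = d * (t * γ) := by simp [Finset.sum_const, Finset.card_univ]
  -- b ≥ 1
  have hb1 : 1 ≤ b := by
    have := F2 ⟨0, hc⟩
    rcases Nat.eq_zero_or_pos b with hb | hb
    · rw [hb, mul_zero] at this; omega
    · exact hb
  set A : ℕ := ∑ k : Fin c, a k with hAdef
  have hAR : (A : ℝ) ≤ (d : ℝ) * ((t:ℝ) * γ) := by exact_mod_cast F1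
  have hbR : (0:ℝ) < (b:ℝ) := by exact_mod_cast hb1
  have hsR : (0:ℝ) < (s:ℝ) := by exact_mod_cast hs
  have hsq : Real.sqrt s * Real.sqrt s = (s:ℝ) := Real.mul_self_sqrt (Nat.cast_nonneg s)
  have hsqpos : (0:ℝ) < Real.sqrt s := Real.sqrt_pos.mpr hsR
  -- key inequality
  have key : Real.sqrt s * (x * M + (γ:ℝ) / M) ≤ (d:ℝ) * ((t:ℝ) * γ) := by
    have hM1 : (1:ℝ) ≤ M := le_max_right _ _
    have hM0 : (0:ℝ) < M := lt_of_lt_of_le one_pos hM1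
    rcases lt_or_ge (b * b) s with hbb | hbb
    -- small max table : everyone appears often
    · have hEc : x * M + (γ:ℝ) / M ≤ (c:ℝ) := by
        have hh := minE_aux x (γ:ℝ) 1 hx hy le_rfl
        rw [mul_one, div_one] at hh
        have hxc : x + (γ:ℝ) = c := by rw [hxdef]; ring
        linarith
      have hcs : (c:ℝ) * s ≤ (b:ℝ) * A := by
        have : c * s ≤ A * b := by
          calc c * s = ∑ _k : Fin c, s := by simp [Finset.sum_const, Finset.card_univ]
            _ ≤ ∑ k : Fin c, a k * b := Finset.sum_le_sum fun k _ => F2 k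
            _ = A * b := by rw [hAdef, Finset.sum_mul]
        calc (c:ℝ) * s ≤ (A:ℝ) * b := by exact_mod_cast this
          _ = (b:ℝ) * A := by ring
      have hble : (b:ℝ) ≤ Real.sqrt s := by
        have hbs : ((b:ℝ))^2 ≤ (s:ℝ) := by
          have : (b*b : ℕ) ≤ s := Nat.le_of_lt hbb
          have := (Nat.cast_le (α := ℝ)).mpr this
          push_cast at this
          nlinarith [this]
        exact (Real.le_sqrt (Nat.cast_nonneg b) (Nat.cast_nonneg s)).mpr hbs
      have hA0 : (0:ℝ) ≤ (A:ℝ) := Nat.cast_nonneg A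
      have hcsA : (c:ℝ) * Real.sqrt s ≤ (A:ℝ) := by
        have h1 : (c:ℝ) * Real.sqrt s * Real.sqrt s ≤ (A:ℝ) * Real.sqrt s := by
          rw [mul_assoc, hsq]
          nlinarith [hcs, mul_le_mul_of_nonneg_right hble hA0]
        exact le_of_mul_le_mul_right h1 hsqpos
      calc Real.sqrt s * (x * M + (γ:ℝ) / M) ≤ Real.sqrt s * c :=
            mul_le_mul_of_nonneg_left hEc hsqpos.le
        _ = (c:ℝ) * Real.sqrt s := by ring
        _ ≤ (A:ℝ) := hcsA
        _ ≤ (d:ℝ) * ((t:ℝ) * γ) := hAR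
    -- big max table
    · -- nat inequality
      have hNat : (c - K₀.card) * (b * b) + K₀.card * s ≤ b * A := by
        have hsplit : ∑ k ∈ K₀, (b * a k) + ∑ k ∈ K₀ᶜ, (b * a k) = ∑ k : Fin c, b * a k :=
          Finset.sum_add_sum_compl K₀ _
        have h1 : ∀ k ∈ K₀ᶜ, b * b ≤ b * a k := fun k hk =>
          Nat.mul_le_mul_left b (F3 k (Finset.mem_compl.mp hk))
        have h2 : ∀ k ∈ K₀, s ≤ b * a k := fun k _ => by
          rw [mul_comm]; exact F2 k
        have hc1 : ∑ k ∈ K₀ᶜ, (b*b) ≤ ∑ k ∈ K₀ᶜ, (b * a k) := Finset.sum_le_sum h1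
        have hc2 : ∑ k ∈ K₀, s ≤ ∑ k ∈ K₀, (b * a k) := Finset.sum_le_sum h2
        have hcompl : K₀ᶜ.card = c - K₀.card := by
          rw [Finset.card_compl, Fintype.card_fin]
        have : (c - K₀.card) * (b*b) + K₀.card * s ≤
            ∑ k ∈ K₀ᶜ, (b * a k) + ∑ k ∈ K₀, (b * a k) := by
          rw [← hcompl]
          have e1 : ∑ _k ∈ K₀ᶜ, (b*b) = K₀ᶜ.card * (b*b) := by
            simp [Finset.sum_const, mul_comm]
          have e2 : ∑ _k ∈ K₀, s = K₀.card * s := by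
            simp [Finset.sum_const, mul_comm]
          omega
        calc (c - K₀.card) * (b*b) + K₀.card * s
            ≤ ∑ k ∈ K₀ᶜ, (b * a k) + ∑ k ∈ K₀, (b * a k) := this
          _ = ∑ k : Fin c, b * a k := by rw [add_comm]; exact hsplit
          _ = b * A := by rw [hAdef, Finset.mul_sum]
      -- cast to ℝ
      have hKc : K₀.card ≤ c := le_trans hK₀γ (le_of_lt hcγ)
      have hNatR : ((c:ℝ) - K₀.card) * ((b:ℝ) * b) + (K₀.card : ℝ) * s ≤ (b:ℝ) * A := by
        have := (Nat.cast_le (α := ℝ)).mpr hNat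
        push_cast [Nat.cast_sub hKc] at this
        convert this using 2 <;> ring_nf
      have hKγR : (K₀.card : ℝ) ≤ (γ:ℝ) := by exact_mod_cast hK₀γ
      have hbbR : (s:ℝ) ≤ (b:ℝ) * b := by exact_mod_cast hbb
      have hmain : x * ((b:ℝ) * b) + (γ:ℝ) * s ≤ (b:ℝ) * ((d:ℝ) * ((t:ℝ)*γ)) := by
        have h3 : (b:ℝ) * A ≤ (b:ℝ) * ((d:ℝ) * ((t:ℝ)*γ)) :=
          mul_le_mul_of_nonneg_left hAR hbR.le
        have h4 : x * ((b:ℝ)*b) + (γ:ℝ)*s ≤ ((c:ℝ) - K₀.card) * ((b:ℝ)*b) + (K₀.card:ℝ)*s := by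
          rw [hxdef]
          nlinarith [mul_nonneg (sub_nonneg.2 hKγR) (sub_nonneg.2 hbbR)]
        linarith
      -- apply minE with m = b / √s
      have hble : Real.sqrt s ≤ (b:ℝ) := by
        have : Real.sqrt s ≤ Real.sqrt ((b:ℝ)*b) := Real.sqrt_le_sqrt hbbR
        rwa [show (b:ℝ)*b = (b:ℝ)^2 by ring, Real.sqrt_sq (Nat.cast_nonneg b)] at this
      have hm1 : (1:ℝ) ≤ (b:ℝ) / Real.sqrt s := (one_le_div hsqpos).mpr hble
      have hminE := minE_aux x (γ:ℝ) ((b:ℝ) / Real.sqrt s) hx hy hm1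
      have heq : Real.sqrt s * (x * ((b:ℝ)/Real.sqrt s) + (γ:ℝ) / ((b:ℝ)/Real.sqrt s)) =
          x * b + (γ:ℝ) * s / b := by
        field_simp
        linear_combination (γ:ℝ) * hsq
      have hlast : x * (b:ℝ) + (γ:ℝ) * s / b ≤ (d:ℝ) * ((t:ℝ)*γ) := by
        have hq : (γ:ℝ) * s / b * b = (γ:ℝ) * s := div_mul_cancel₀ _ hbR.ne'
        have h5 : (x * (b:ℝ) + (γ:ℝ) * s / b) * b ≤ ((d:ℝ) * ((t:ℝ)*γ)) * b := by
          nlinarith [hmain, hq]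
        exact le_of_mul_le_mul_right h5 hbR
      calc Real.sqrt s * (x * M + (γ:ℝ) / M)
          ≤ Real.sqrt s * (x * ((b:ℝ)/Real.sqrt s) + (γ:ℝ) / ((b:ℝ)/Real.sqrt s)) :=
            mul_le_mul_of_nonneg_left hminE hsqpos.le
        _ = x * b + (γ:ℝ) * s / b := heq
        _ ≤ (d:ℝ) * ((t:ℝ)*γ) := hlast
  -- conclude
  rw [Int.ceil_le]
  push_cast
  rw [div_mul_eq_mul_div, div_le_iff₀ htγ]
  calc Real.sqrt s * (x * M + (γ:ℝ) / M) ≤ (d:ℝ) * ((t:ℝ) * γ) := key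
    _ = (d:ℝ) * ((t:ℝ) * γ) := rfl
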